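/- Let q ∈ (0,1/2), L = 1, and R ≥ 1 an integer. Then p₀ := (1 - 2q + q^(R+1))/(1 - 2q + q^R) is the unique point in (0,1) with α(p₀,q,R,1) = 1/2, where α is as defined; moreover α(p) < 1/2 for p < p₀ and α(p) > 1/2 for p > p₀. -/

import Mathlib

noncomputable def alpha (p q : ℝ) (R L : ℕ) : ℝ :=
  (p * ((1-q) * q^R * (1 - (1-p)^L)) + q * (p * (1-p)^L * (1 - q^R))) /
    ((1-q) * q^R * (1 - (1-p)^L) + p * (1-p)^L * (1 - q^R))

theorem stmt3 (q : ℝ) (R : ℕ) (hq : q ∈ Set.Ioo (0:ℝ) (1/2)) (hR : 1 ≤ R) :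
    (1 - 2*q + q^(R+1)) / (1 - 2*q + q^R) ∈ Set.Ioo (0:ℝ) 1 ∧
    alpha ((1 - 2*q + q^(R+1)) / (1 - 2*q + q^R)) q R 1 = 1/2 ∧
    (∀ p ∈ Set.Ioo (0:ℝ) 1,
      p < (1 - 2*q + q^(R+1)) / (1 - 2*q + q^R) → alpha p q R 1 < 1/2) ∧
    (∀ p ∈ Set.Ioo (0:ℝ) 1,
      (1 - 2*q + q^(R+1)) / (1 - 2*q + q^R) < p → 1/2 < alpha p q R 1) ∧
    (∀ p ∈ Set.Ioo (0:ℝ) 1,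
      alpha p q R 1 = 1/2 → p = (1 - 2*q + q^(R+1)) / (1 - 2*q + q^R)) := by
  obtain ⟨hq0, hq2⟩ := hq
  have hq1 : q < 1 := by linarith
  have hqR1 : q ^ R < 1 := pow_lt_one₀ (le_of_lt hq0) hq1 (by omega)
  have hqRpos : 0 < q ^ R := pow_pos hq0 R
  have hD : 0 < 1 - 2*q + q^R := by linarith
  have hNpos : 0 < 1 - 2*q + q^(R+1) := by
    have : 0 < q^(R+1) := pow_pos hq0 _
    linarith
  have hND : 1 - 2*q + q^(R+1) < 1 - 2*q + q^R := by
    have h1 : q^(R+1) < q^R := by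
      have : q^(R+1) = q^R * q := by ring
      nlinarith
    linarith
  have key : ∀ p ∈ Set.Ioo (0:ℝ) 1, ∃ E : ℝ, 0 < E ∧
      alpha p q R 1 - 1/2 = ((1-2*q+q^R)*p - (1-2*q+q^(R+1)))/(2*E) := by
    intro p hp
    obtain ⟨hpl, hpu⟩ := hp
    refine ⟨(1-q)*q^R + (1-p)*(1-q^R), ?_, ?_⟩
    · have h1 : 0 < (1-q)*q^R := mul_pos (by linarith) hqRpos
      have h2 : 0 < (1-p)*(1-q^R) := mul_pos (by linarith) (by linarith)
      linarith
    · have hE : 0 < (1-q)*q^R + (1-p)*(1-q^R) := by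
        have h1 : 0 < (1-q)*q^R := mul_pos (by linarith) hqRpos
        have h2 : 0 < (1-p)*(1-q^R) := mul_pos (by linarith) (by linarith)
        linarith
      have halpha : alpha p q R 1
          = (p*(1-q)*q^R + q*(1-p)*(1-q^R)) / ((1-q)*q^R + (1-p)*(1-q^R)) := by
        rw [alpha,
          show (1-q) * q^R * (1 - (1-p)^1) + p * (1-p)^1 * (1 - q^R)
            = p * ((1-q)*q^R + (1-p)*(1-q^R)) from by ring,
          show p * ((1-q) * q^R * (1 - (1-p)^1)) + q * (p * (1-p)^1 * (1 - q^R))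
            = p * (p*(1-q)*q^R + q*(1-p)*(1-q^R)) from by ring,
          mul_div_mul_left _ _ (ne_of_gt hpl)]
      rw [halpha]
      field_simp
      ring
  refine ⟨⟨div_pos hNpos hD, (div_lt_one hD).mpr hND⟩, ?_, ?_, ?_, ?_⟩
  · have hmem : (1 - 2*q + q^(R+1)) / (1 - 2*q + q^R) ∈ Set.Ioo (0:ℝ) 1 :=
      ⟨div_pos hNpos hD, (div_lt_one hD).mpr hND⟩
    obtain ⟨E, hE, hf⟩ := key _ hmem
    have hnum : (1-2*q+q^R) * ((1 - 2*q + q^(R+1)) / (1 - 2*q + q^R))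
        - (1-2*q+q^(R+1)) = 0 := by
      field_simp
      ring
    rw [hnum, zero_div] at hf
    linarith
  · intro p hp hlt
    obtain ⟨E, hE, hf⟩ := key p hp
    have hnum : (1-2*q+q^R)*p - (1-2*q+q^(R+1)) < 0 := by
      have := (lt_div_iff₀ hD).mp hlt
      linarith
    have := div_neg_of_neg_of_pos hnum (by linarith : (0:ℝ) < 2*E)
    linarith
  · intro p hp hlt
    obtain ⟨E, hE, hf⟩ := key p hp
    have hnum : 0 < (1-2*q+q^R)*p - (1-2*q+q^(R+1)) := by
      have := (div_lt_iff₀ hD).mp hlt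
      linarith
    have := div_pos hnum (by linarith : (0:ℝ) < 2*E)
    linarith
  · intro p hp heq
    obtain ⟨E, hE, hf⟩ := key p hp
    rw [heq, sub_self] at hf
    have hz : ((1-2*q+q^R)*p - (1-2*q+q^(R+1)))/(2*E) = 0 := hf.symm
    rw [div_eq_zero_iff] at hz
    have hnum : (1-2*q+q^R)*p - (1-2*q+q^(R+1)) = 0 :=
      hz.resolve_right (by linarith)
    rw [eq_div_iff (ne_of_gt hD)]
    linarith
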